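/- With notation as follows: V a real vector space, v_1, …, v_d ∈ V linearly independent, σ^i = S(v_1,…,v_i), τ^{d−i} = S(v_{i+1},…,v_d), a, b > 0, A_i = a σ^i + b τ^{d−i} + b(v_1+⋯+v_i) for i ≥ 0, and B_i = a σ^{i−1} + b τ^{d−i} + b(v_1+⋯+v_i) for i ≥ 1. Then for each 1 ≤ i ≤ d, (A_0 ∪ ⋯ ∪ A_{i−1}) ∩ A_i = B_i. -/

import Mathlib

open scoped Pointwise

/-- `simplexS w` is the simplex `S(w_1, …, w_k) =
{ x_1 w_1 + ⋯ + x_k w_k : 1 ≥ x_1 ≥ ⋯ ≥ x_k ≥ 0 }`. -/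
def simplexS {V : Type*} [AddCommGroup V] [Module ℝ V] {k : ℕ} (w : Fin k → V) : Set V :=
  {y | ∃ x : Fin k → ℝ, (∀ i, 0 ≤ x i) ∧ (∀ i, x i ≤ 1) ∧
    (∀ i j : Fin k, i ≤ j → x j ≤ x i) ∧ y = ∑ i, x i • w i}

open Finset

lemma sum_lt_eq {d p : ℕ} {M : Type*} [AddCommMonoid M] (hp : p ≤ d) (g : Fin d → M) :
    ∑ t : Fin p, g ⟨t.1, by omega⟩ =
    ∑ t ∈ Finset.univ.filter (fun t : Fin d => t.1 < p), g t := by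
  refine Finset.sum_bij' (fun (t : Fin p) _ => (⟨t.1, by omega⟩ : Fin d))
    (fun t ht => (⟨t.1, by simpa using ht⟩ : Fin p)) ?_ ?_ ?_ ?_ ?_ <;> simp

lemma sum_ge_eq {d q : ℕ} {M : Type*} [AddCommMonoid M] (hq : q ≤ d) (g : Fin d → M) :
    ∑ t : Fin (d - q), g ⟨q + t.1, by omega⟩ =
    ∑ t ∈ Finset.univ.filter (fun t : Fin d => q ≤ t.1), g t := by
  refine Finset.sum_bij' (fun (t : Fin (d - q)) _ => (⟨q + t.1, by omega⟩ : Fin d))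
    (fun t ht => (⟨t.1 - q, by
      have h1 := t.2
      have h2 : q ≤ t.1 := by simpa using ht
      omega⟩ : Fin (d - q)))
    ?_ ?_ ?_ ?_ ?_ <;> simp +contextual [Fin.ext_iff] <;> omega

lemma key_sum {V : Type*} [AddCommGroup V] [Module ℝ V] {d : ℕ} (v : Fin d → V)
    {a b : ℝ} (ha : a ≠ 0) (hb : b ≠ 0) {p q : ℕ} (hpq : p ≤ q) (hq : q ≤ d)
    (c : Fin d → ℝ) (hmid : ∀ t : Fin d, p ≤ t.1 → t.1 < q → c t = b) :
    a • (∑ t : Fin p, ((c ⟨t.1, by omega⟩ - b) / a) • v ⟨t.1, by omega⟩)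
      + b • (∑ s : Fin (d - q), (c ⟨q + s.1, by omega⟩ / b) • v ⟨q + s.1, by omega⟩)
      + b • ∑ t ∈ Finset.univ.filter (fun t : Fin d => t.1 < q), v t
    = ∑ t, c t • v t := by
  have hpd : p ≤ d := le_trans hpq hq
  rw [Finset.smul_sum, Finset.smul_sum, Finset.smul_sum,
    sum_lt_eq hpd (fun t => a • (((c t - b) / a) • v t)),
    sum_ge_eq hq (fun t => b • ((c t / b) • v t))]
  have hsplit : ∑ t, c t • v t
      = ∑ t ∈ univ.filter (fun t : Fin d => t.1 < q), c t • v t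
        + ∑ t ∈ univ.filter (fun t : Fin d => q ≤ t.1), c t • v t := by
    rw [← Finset.sum_filter_add_sum_filter_not univ (fun t : Fin d => t.1 < q)]
    congr 1
    exact Finset.sum_congr (Finset.filter_congr (fun t _ => by simp [not_lt])) (fun _ _ => rfl)
  rw [hsplit]
  have e2 : ∀ t : Fin d, b • ((c t / b) • v t) = c t • v t := by
    intro t; rw [smul_smul, mul_div_cancel₀ _ hb]
  have e1 : ∀ t : Fin d, a • (((c t - b) / a) • v t) = (c t - b) • v t := by
    intro t; rw [smul_smul, mul_div_cancel₀ _ ha]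
  simp only [e1, e2]
  have hsub : ∑ t ∈ univ.filter (fun t : Fin d => t.1 < p), (c t - b) • v t
      = ∑ t ∈ univ.filter (fun t : Fin d => t.1 < q), (c t - b) • v t := by
    apply Finset.sum_subset
    · intro t ht
      simp only [mem_filter, mem_univ, true_and] at ht ⊢
      omega
    · intro t ht hnt
      simp only [mem_filter, mem_univ, true_and] at ht hnt
      rw [hmid t (by omega) ht, sub_self, zero_smul]
  rw [hsub]
  have : ∑ t ∈ univ.filter (fun t : Fin d => t.1 < q), c t • v t
      = ∑ t ∈ univ.filter (fun t : Fin d => t.1 < q), ((c t - b) • v t + b • v t) := by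
    apply Finset.sum_congr rfl
    intro t _; rw [← add_smul]; ring_nf
  rw [this, Finset.sum_add_distrib]
  abel

lemma mem_block {V : Type*} [AddCommGroup V] [Module ℝ V] {d : ℕ} (v : Fin d → V)
    {a b : ℝ} (ha : 0 < a) (hb : 0 < b) {p q : ℕ} (hpq : p ≤ q) (hq : q ≤ d) (z : V) :
    (z ∈ a • simplexS (fun t : Fin p => v ⟨t.1, by omega⟩)
      + b • simplexS (fun t : Fin (d - q) => v ⟨q + t.1, by omega⟩)
      + ({b • ∑ j ∈ Finset.univ.filter (fun j : Fin d => (j : ℕ) < q), v j} : Set V))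
    ↔ ∃ c : Fin d → ℝ,
        (∀ s t : Fin d, s ≤ t → c t ≤ c s) ∧
        (∀ t : Fin d, t.1 < p → b ≤ c t ∧ c t ≤ a + b) ∧
        (∀ t : Fin d, p ≤ t.1 → t.1 < q → c t = b) ∧
        (∀ t : Fin d, q ≤ t.1 → 0 ≤ c t ∧ c t ≤ b) ∧
        z = ∑ t, c t • v t := by
  have hpd : p ≤ d := le_trans hpq hq
  constructor
  · rintro ⟨u, hu, w, hw, rfl⟩
    rw [Set.mem_singleton_iff] at hw
    subst hw
    obtain ⟨u1, hu1, u2, hu2, rfl⟩ := hu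
    obtain ⟨y1, hy1, rfl⟩ := hu1
    obtain ⟨y2, hy2, rfl⟩ := hu2
    obtain ⟨x, hx0, hx1, hxm, rfl⟩ := hy1
    obtain ⟨y, hy0, hy1', hym, rfl⟩ := hy2
    classical
    refine ⟨fun t => if h : t.1 < p then a * x ⟨t.1, h⟩ + b
      else if h2 : q ≤ t.1 then b * y ⟨t.1 - q, by have := t.2; omega⟩ else b, ?_, ?_, ?_, ?_, ?_⟩
    · -- antitone
      intro s t hst
      rcases Fin.le_def.mp hst with hst'
      by_cases htp : t.1 < p
      · have hsp : s.1 < p := by omega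
        simp only [dif_pos htp, dif_pos hsp]
        have := hxm ⟨s.1, hsp⟩ ⟨t.1, htp⟩ (Fin.mk_le_mk.mpr hst')
        nlinarith
      · by_cases htq : q ≤ t.1
        · simp only [dif_neg htp, dif_pos htq]
          have hyt : b * y ⟨t.1 - q, by have := t.2; omega⟩ ≤ b := by
            have := hy1' ⟨t.1 - q, by have := t.2; omega⟩
            nlinarith
          by_cases hsp : s.1 < p
          · simp only [dif_pos hsp]
            have := hx0 ⟨s.1, hsp⟩
            nlinarith
          · by_cases hsq : q ≤ s.1
            · simp only [dif_neg hsp, dif_pos hsq]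
              have := hym ⟨s.1 - q, by have := s.2; omega⟩ ⟨t.1 - q, by have := t.2; omega⟩
                (Fin.mk_le_mk.mpr (by omega))
              nlinarith
            · simp only [dif_neg hsp, dif_neg hsq]
              exact hyt
        · -- p ≤ t < q
          simp only [dif_neg htp, dif_neg htq]
          by_cases hsp : s.1 < p
          · simp only [dif_pos hsp]
            have := hx0 ⟨s.1, hsp⟩
            nlinarith
          · have hsq : ¬ q ≤ s.1 := by omega
            simp only [dif_neg hsp, dif_neg hsq]
            exact le_refl b
    · intro t ht
      simp only [dif_pos ht]
      have h0 := hx0 ⟨t.1, ht⟩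
      have h1 := hx1 ⟨t.1, ht⟩
      constructor <;> nlinarith
    · intro t h1 h2
      simp only [dif_neg (by omega : ¬ t.1 < p), dif_neg (by omega : ¬ q ≤ t.1)]
    · intro t ht
      simp only [dif_neg (by omega : ¬ t.1 < p), dif_pos ht]
      have h0 := hy0 ⟨t.1 - q, by have := t.2; omega⟩
      have h1 := hy1' ⟨t.1 - q, by have := t.2; omega⟩
      constructor <;> nlinarith
    · rw [← key_sum v ha.ne' hb.ne' hpq hq _ (fun t h1 h2 => by
        simp only [dif_neg (by omega : ¬ t.1 < p), dif_neg (by omega : ¬ q ≤ t.1)])]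
      congr 1
      congr 1
      · congr 1
        apply Finset.sum_congr rfl
        intro t _
        simp only [dif_pos t.2]
        congr 1
        field_simp
        ring
      · congr 1
        apply Finset.sum_congr rfl
        intro s _
        have hs : q + s.1 < d := by have := s.2; omega
        simp only [dif_neg (by omega : ¬ q + s.1 < p), dif_pos (by omega : q ≤ q + s.1)]
        have : (⟨q + s.1 - q, by omega⟩ : Fin (d - q)) = s := by
          apply Fin.ext; simp
        rw [this]
        congr 1
        field_simp
  · rintro ⟨c, hmono, hhead, hmid, htail, rfl⟩
    refine ⟨a • (∑ t : Fin p, ((c ⟨t.1, by omega⟩ - b) / a) • v ⟨t.1, by omega⟩)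
        + b • (∑ s : Fin (d - q), (c ⟨q + s.1, by omega⟩ / b) • v ⟨q + s.1, by omega⟩),
      ⟨_, ⟨_, ⟨fun t => (c ⟨t.1, by omega⟩ - b) / a, ?_, ?_, ?_, rfl⟩, rfl⟩,
       _, ⟨_, ⟨fun s => c ⟨q + s.1, by omega⟩ / b, ?_, ?_, ?_, rfl⟩, rfl⟩, rfl⟩,
      _, Set.mem_singleton _, ?_⟩
    · intro t
      have := (hhead ⟨t.1, by omega⟩ t.2).1
      exact div_nonneg (by linarith) ha.le
    · intro t
      rw [div_le_one ha]
      have := (hhead ⟨t.1, by omega⟩ t.2).2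
      linarith
    · intro s t hst
      have := hmono ⟨s.1, by omega⟩ ⟨t.1, by omega⟩ (Fin.mk_le_mk.mpr hst)
      exact div_le_div_of_nonneg_right (by linarith) ha.le
    · intro s
      have := (htail ⟨q + s.1, by have := s.2; omega⟩ (Nat.le_add_right q s.1)).1
      positivity
    · intro s
      rw [div_le_one hb]
      exact (htail ⟨q + s.1, by have := s.2; omega⟩ (Nat.le_add_right q s.1)).2
    · intro s t hst
      have := hmono ⟨q + s.1, by have := s.2; omega⟩ ⟨q + t.1, by have := t.2; omega⟩
        (Fin.mk_le_mk.mpr (by omega))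
      exact div_le_div_of_nonneg_right this hb.le
    · exact key_sum v ha.ne' hb.ne' hpq hq c hmid

lemma coords_eq {V : Type*} [AddCommGroup V] [Module ℝ V] {d : ℕ} {v : Fin d → V}
    (hv : LinearIndependent ℝ v) {c c' : Fin d → ℝ}
    (h : ∑ t, c t • v t = ∑ t, c' t • v t) : c = c' := by
  have h2 : ∑ t, (c t - c' t) • v t = 0 := by
    simp only [sub_smul, Finset.sum_sub_distrib, h, sub_self]
  have h3 := Fintype.linearIndependent_iff.mp hv (fun t => c t - c' t) h2
  funext t
  have := h3 t
  linarith

theorem stmt13 {V : Type*} [AddCommGroup V] [Module ℝ V] {d : ℕ}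
    (v : Fin d → V) (hv : LinearIndependent ℝ v) (a b : ℝ) (ha : 0 < a) (hb : 0 < b)
    -- `σ i = S(v_1, …, v_i)`:
    (σ : Fin (d + 1) → Set V)
    (hσ : ∀ i, σ i = simplexS (fun t : Fin i.1 => v (Fin.castLE i.is_le t)))
    -- `τ i = S(v_{i+1}, …, v_d)`:
    (τ : Fin (d + 1) → Set V)
    (hτ : ∀ i, τ i = simplexS (fun t : Fin (d - i.1) => v ⟨i.1 + t.1, by omega⟩))
    -- `A i = a σ^i + b τ^{d-i} + b(v_1 + ⋯ + v_i)`: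
    (A : Fin (d + 1) → Set V)
    (hA : ∀ i, A i = a • σ i + b • τ i
      + ({b • ∑ j ∈ Finset.univ.filter (fun j : Fin d => (j : ℕ) < i.1), v j} : Set V))
    -- `B i = a σ^{i-1} + b τ^{d-i} + b(v_1 + ⋯ + v_i)`, for `i ≥ 1`:
    (B : Fin (d + 1) → Set V)
    (hB : ∀ i : Fin (d + 1), 1 ≤ i.1 →
      B i = a • simplexS (fun t : Fin (i.1 - 1) => v ⟨t.1, by omega⟩) + b • τ i
        + ({b • ∑ j ∈ Finset.univ.filter (fun j : Fin d => (j : ℕ) < i.1), v j} : Set V)) :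
    ∀ i : Fin (d + 1), 1 ≤ i.1 →
      (⋃ j : Fin (d + 1), ⋃ (_ : j.1 < i.1), A j) ∩ A i = B i := by
  have hAset : ∀ (j : Fin (d + 1)) (z : V), z ∈ A j ↔ ∃ c : Fin d → ℝ,
      (∀ s t : Fin d, s ≤ t → c t ≤ c s) ∧
      (∀ t : Fin d, t.1 < j.1 → b ≤ c t ∧ c t ≤ a + b) ∧
      (∀ t : Fin d, j.1 ≤ t.1 → t.1 < j.1 → c t = b) ∧
      (∀ t : Fin d, j.1 ≤ t.1 → 0 ≤ c t ∧ c t ≤ b) ∧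
      z = ∑ t, c t • v t := by
    intro j z
    rw [hA j, hσ j, hτ j]
    have e1 : (fun t : Fin j.1 => v (Fin.castLE j.is_le t))
        = fun t : Fin j.1 => v ⟨t.1, by have := t.2; omega⟩ := by
      funext t; congr 1
    rw [e1]
    exact mem_block v ha hb (le_refl j.1) j.is_le z
  intro i hi
  have hBset : ∀ z : V, z ∈ B i ↔ ∃ c : Fin d → ℝ,
      (∀ s t : Fin d, s ≤ t → c t ≤ c s) ∧
      (∀ t : Fin d, t.1 < i.1 - 1 → b ≤ c t ∧ c t ≤ a + b) ∧
      (∀ t : Fin d, i.1 - 1 ≤ t.1 → t.1 < i.1 → c t = b) ∧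
      (∀ t : Fin d, i.1 ≤ t.1 → 0 ≤ c t ∧ c t ≤ b) ∧
      z = ∑ t, c t • v t := by
    intro z
    rw [hB i hi, hτ i]
    exact mem_block v ha hb (by omega) i.is_le z
  ext z
  simp only [Set.mem_inter_iff, Set.mem_iUnion]
  constructor
  · rintro ⟨⟨j, hji, hzj⟩, hzi⟩
    obtain ⟨c, hm, hh, _, ht, rfl⟩ := (hAset j z).mp hzj
    obtain ⟨c', hm', hh', _, ht', hce⟩ := (hAset i _).mp hzi
    have hcc : c = c' := coords_eq hv hce
    subst hcc
    rw [hBset]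
    refine ⟨c, hm, fun t h => hh' t (by omega), fun t h1 h2 => ?_, ht', rfl⟩
    have hte : t.1 = i.1 - 1 := by omega
    have h3 := (ht t (by omega)).2
    have h4 := (hh' t h2).1
    linarith
  · intro hz
    obtain ⟨c, hm, hh, hmid, ht, rfl⟩ := (hBset z).mp hz
    have him : i.1 - 1 < d + 1 := by omega
    refine ⟨⟨⟨i.1 - 1, him⟩, by show i.1 - 1 < i.1; omega, ?_⟩, ?_⟩
    · rw [hAset]
      refine ⟨c, hm, fun t h => hh t (by simpa using h), fun t h1 h2 => by omega, fun t h => ?_, rfl⟩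
      simp only at h
      rcases Nat.lt_or_ge t.1 i.1 with h2 | h2
      · have := hmid t (by omega) h2
        constructor <;> [linarith; linarith]
      · exact ht t h2
    · rw [hAset]
      refine ⟨c, hm, fun t h => ?_, fun t h1 h2 => by omega, ?_, rfl⟩
      · rcases Nat.lt_or_ge t.1 (i.1 - 1) with h2 | h2
        · exact hh t h2
        · have := hmid t h2 h
          constructor <;> [linarith; linarith]
      · exact ht
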